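/- For all X, Y ∈ ℂ³, define I_i = Im(X_i conj(Y_i)). Then the expression S(X,Y) = 4(I₁+I₂)² + 4(I₂+I₃)² + 4(I₁-I₃)² + (1/2)|X₁conj(Y₂) - Y₁conj(X₂)|² + (1/2)|X₂conj(Y₃) - Y₂conj(X₃)|² + (1/2)|X₁Y₃ - Y₁X₃|² is nonnegative, and it vanishes for some X, Y with X ∧ Y ≠ 0 (viewing X, Y as vectors in ℂ³): namely, for X₁ = X₂ = X₃ = t with t ∈ ℝ, t ≠ 0, and Y₁ = conj(Y₂) = Y₃ = ρ with ρ ∈ ℂ \ ℝ, one has S(X,Y) = 0 while X and Y are ℂ-linearly independent. -/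

import Mathlib

/-- The sectional-curvature expression `S(X,Y)` of the Wallach threefold. -/
noncomputable def Swallach (X Y : Fin 3 → ℂ) : ℝ :=
  4 * ((X 0 * (starRingEnd ℂ) (Y 0)).im + (X 1 * (starRingEnd ℂ) (Y 1)).im) ^ 2 +
  4 * ((X 1 * (starRingEnd ℂ) (Y 1)).im + (X 2 * (starRingEnd ℂ) (Y 2)).im) ^ 2 +
  4 * ((X 0 * (starRingEnd ℂ) (Y 0)).im - (X 2 * (starRingEnd ℂ) (Y 2)).im) ^ 2 +
  (1 / 2) * ‖X 0 * (starRingEnd ℂ) (Y 1) - Y 0 * (starRingEnd ℂ) (X 1)‖ ^ 2 +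
  (1 / 2) * ‖X 1 * (starRingEnd ℂ) (Y 2) - Y 1 * (starRingEnd ℂ) (X 2)‖ ^ 2 +
  (1 / 2) * ‖X 0 * Y 2 - Y 0 * X 2‖ ^ 2

theorem stmt14 :
    (∀ X Y : Fin 3 → ℂ, 0 ≤ Swallach X Y) ∧
    (∀ (t : ℝ) (ρ : ℂ), t ≠ 0 → ρ.im ≠ 0 →
      Swallach (fun _ => (t : ℂ)) ![ρ, (starRingEnd ℂ) ρ, ρ] = 0 ∧
      LinearIndependent ℂ ![(fun _ => (t : ℂ) : Fin 3 → ℂ), ![ρ, (starRingEnd ℂ) ρ, ρ]]) := by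
  constructor
  · intro X Y
    unfold Swallach
    positivity
  · intro t ρ ht hρ
    constructor
    · unfold Swallach
      simp [Complex.ext_iff, Complex.mul_im, Complex.mul_re]
      simp [mul_comm]
    · rw [linearIndependent_fin2]
      constructor
      · intro h
        have h0 := congrFun h 0
        simp [Complex.ext_iff] at h0
        exact hρ h0.2
      · intro a h
        have h0 := congrFun h 0
        have h1 := congrFun h 1
        simp at h0 h1
        have : a * (ρ - (starRingEnd ℂ) ρ) = 0 := by rw [mul_sub, h0, h1]; ring
        rcases mul_eq_zero.1 this with ha | hd
        · subst ha; simp at h0; exact ht (by exact_mod_cast h0.symm)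
        · apply hρ
          have := sub_eq_zero.1 hd
          have h2 : ρ.im = -ρ.im := by simpa [Complex.ext_iff] using this
          linarith
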